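/- Let ⟨M, ⋆, R, γ, η, ε⟩ be a right-monoidal category with canonical monad T = ⟨R⋆−, μ, η⟩ and canonical comonad Q = ⟨−⋆R, δ, ε⟩, and E = End(R). (a) If ⟨L, Δ_L⟩ is a Q-comodule then λ_L(r) := ε_L∘(L⋆r)∘Δ_L defines a monoid morphism E → M(L,L), every Q-comodule morphism is E-equivariant for these actions, and hence there is a faithful functor F_z : M^Q → 𝓔 acting as the identity on underlying objects and arrows. (b) Dually, if ⟨N, ∇_N⟩ is a T-module then λ_N(r) := ∇_N∘(r⋆N)∘η_N defines a monoid morphism E → M(N,N), every T-module morphism is E-equivariant, and there is a faithful functor F_q : M_T → 𝓔. -/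

import Mathlib

open CategoryTheory

universe v u

/-- A right-monoidal (skew-monoidal) category structure on a category `C`
with unit object `R`: a product `⋆`, a skew-associator `γ`, a unit `η` and
a counit `ε`, none of which is assumed invertible, subject to the pentagon
and the four (co)unit axioms. -/
structure RightMonoidalStruct (C : Type u) [Category.{v} C] (R : C) where
  smp : C → C → C
  smpHom : ∀ {X X' Y Y' : C}, (X ⟶ X') → (Y ⟶ Y') → (smp X Y ⟶ smp X' Y')
  smpHom_id : ∀ (X Y : C), smpHom (𝟙 X) (𝟙 Y) = 𝟙 (smp X Y)
  smpHom_comp : ∀ {X X' X'' Y Y' Y'' : C} (f : X ⟶ X') (f' : X' ⟶ X'')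
      (g : Y ⟶ Y') (g' : Y' ⟶ Y''),
      smpHom (f ≫ f') (g ≫ g') = smpHom f g ≫ smpHom f' g'
  γ : ∀ (L M N : C), smp L (smp M N) ⟶ smp (smp L M) N
  η : ∀ (M : C), M ⟶ smp R M
  ε : ∀ (M : C), smp M R ⟶ M
  γ_natural : ∀ {L L' M M' N N' : C} (f : L ⟶ L') (g : M ⟶ M') (h : N ⟶ N'),
      smpHom f (smpHom g h) ≫ γ L' M' N' = γ L M N ≫ smpHom (smpHom f g) h
  η_natural : ∀ {M M' : C} (f : M ⟶ M'), f ≫ η M' = η M ≫ smpHom (𝟙 R) f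
  ε_natural : ∀ {M M' : C} (f : M ⟶ M'), smpHom f (𝟙 R) ≫ ε M' = ε M ≫ f
  pentagon : ∀ (K L M N : C),
      smpHom (𝟙 K) (γ L M N) ≫ γ K (smp L M) N ≫ smpHom (γ K L M) (𝟙 N)
        = γ K L (smp M N) ≫ γ (smp K L) M N
  unit_triangle : ∀ (M N : C), η (smp M N) ≫ γ R M N = smpHom (η M) (𝟙 N)
  counit_triangle : ∀ (M N : C), γ M N R ≫ ε (smp M N) = smpHom (𝟙 M) (ε N)
  mixed_triangle : ∀ (M N : C),
      smpHom (𝟙 M) (η N) ≫ γ M R N ≫ smpHom (ε M) (𝟙 N) = 𝟙 (smp M N)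
  unit_counit : η R ≫ ε R = 𝟙 R


variable {C : Type u} [Category.{v} C] {R : C}

/-- The multiplication `μ_M := (ε_R ⋆ M) ∘ γ_{R,R,M}` of the canonical monad `T = R ⋆ -`. -/
def RightMonoidalStruct.μ (S : RightMonoidalStruct C R) (M : C) :
    S.smp R (S.smp R M) ⟶ S.smp R M :=
  S.γ R R M ≫ S.smpHom (S.ε R) (𝟙 M)

/-- The comultiplication `δ_M := γ_{M,R,R} ∘ (M ⋆ η_R)` of the canonical comonad `Q = - ⋆ R`. -/
def RightMonoidalStruct.δ (S : RightMonoidalStruct C R) (M : C) :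
    S.smp M R ⟶ S.smp (S.smp M R) R :=
  S.smpHom (𝟙 M) (S.η R) ≫ S.γ M R R


/-- The canonical right `E`-action (`E = End R`) on a right-monoidal product. -/
def rhoAct (S : RightMonoidalStruct C R) (X Y : C) (r : R ⟶ R) :
    S.smp X Y ⟶ S.smp X Y :=
  S.smpHom (𝟙 X) (S.η Y) ≫ S.smpHom (𝟙 X) (S.smpHom r (𝟙 Y)) ≫
    S.γ X R Y ≫ S.smpHom (S.ε X) (𝟙 Y)

/-- A left `E`-object in `C`, where `E = End R`: an object together with a
monoid morphism `E → End X`. -/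
structure EObject (S : RightMonoidalStruct C R) where
  X : C
  act : (R ⟶ R) → (X ⟶ X)
  act_id : act (𝟙 R) = 𝟙 X
  act_comp : ∀ r r' : R ⟶ R, act (r ≫ r') = act r ≫ act r'

/-- The category `𝓔` of left `E`-objects, with `E`-equivariant arrows. -/
instance (S : RightMonoidalStruct C R) : Category (EObject S) where
  Hom A B := { t : A.X ⟶ B.X // ∀ r : R ⟶ R, A.act r ≫ t = t ≫ B.act r }
  id A := ⟨𝟙 A.X, fun r => by simp⟩
  comp {A B D'} f g := ⟨f.1 ≫ g.1, fun r => by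
    rw [← Category.assoc, f.2 r, Category.assoc, g.2 r, ← Category.assoc]⟩
  id_comp f := Subtype.ext (Category.id_comp f.1)
  comp_id f := Subtype.ext (Category.comp_id f.1)
  assoc f g h := Subtype.ext (Category.assoc f.1 g.1 h.1)

/-- The unit object `R` as a left `E`-object (with the tautological action). -/
def Runit (S : RightMonoidalStruct C R) : EObject S where
  X := R
  act r := r
  act_id := rfl
  act_comp _ _ := rfl

/-- A comodule (Eilenberg–Moore coalgebra) over the canonical comonad
`Q = ⟨- ⋆ R, δ, ε⟩` of a right-monoidal category. -/
structure QComod (S : RightMonoidalStruct C R) where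
  X : C
  coact : X ⟶ S.smp X R
  coassoc : coact ≫ S.smpHom coact (𝟙 R) = coact ≫ S.δ X
  counit : coact ≫ S.ε X = 𝟙 X

/-- The Eilenberg–Moore category `M^Q` of `Q`-comodules. -/
instance (S : RightMonoidalStruct C R) : Category (QComod S) where
  Hom A B := { t : A.X ⟶ B.X // A.coact ≫ S.smpHom t (𝟙 R) = t ≫ B.coact }
  id A := ⟨𝟙 A.X, by simp [S.smpHom_id]⟩
  comp {A B D'} f g := ⟨f.1 ≫ g.1, by
    have : S.smpHom (f.1 ≫ g.1) (𝟙 R) = S.smpHom f.1 (𝟙 R) ≫ S.smpHom g.1 (𝟙 R) := by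
      rw [← S.smpHom_comp]; simp
    rw [this, ← Category.assoc, f.2, Category.assoc, g.2, ← Category.assoc]⟩
  id_comp f := Subtype.ext (Category.id_comp f.1)
  comp_id f := Subtype.ext (Category.comp_id f.1)
  assoc f g h := Subtype.ext (Category.assoc f.1 g.1 h.1)

/-- A module (Eilenberg–Moore algebra) over the canonical monad
`T = ⟨R ⋆ -, μ, η⟩` of a right-monoidal category. -/
structure TMod (S : RightMonoidalStruct C R) where
  X : C
  act : S.smp R X ⟶ X
  assoc : S.smpHom (𝟙 R) act ≫ act = S.μ X ≫ act
  unit : S.η X ≫ act = 𝟙 X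

/-- The Eilenberg–Moore category `M_T` of `T`-modules. -/
instance (S : RightMonoidalStruct C R) : Category (TMod S) where
  Hom A B := { t : A.X ⟶ B.X // A.act ≫ t = S.smpHom (𝟙 R) t ≫ B.act }
  id A := ⟨𝟙 A.X, by simp [S.smpHom_id]⟩
  comp {A B D'} f g := ⟨f.1 ≫ g.1, by
    have : S.smpHom (𝟙 R) (f.1 ≫ g.1) = S.smpHom (𝟙 R) f.1 ≫ S.smpHom (𝟙 R) g.1 := by
      rw [← S.smpHom_comp]; simp
    rw [this, ← Category.assoc, f.2, Category.assoc, g.2, ← Category.assoc]⟩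
  id_comp f := Subtype.ext (Category.id_comp f.1)
  comp_id f := Subtype.ext (Category.comp_id f.1)
  assoc f g h := Subtype.ext (Category.assoc f.1 g.1 h.1)

/-- The left `E`-action `λ_L(r) := ε_L ∘ (L ⋆ r) ∘ Δ_L` induced on a `Q`-comodule. -/
def lamQ (S : RightMonoidalStruct C R) (L : QComod S) (r : R ⟶ R) : L.X ⟶ L.X :=
  L.coact ≫ S.smpHom (𝟙 L.X) r ≫ S.ε L.X

/-- The left `E`-action `λ_N(r) := ∇_N ∘ (r ⋆ N) ∘ η_N` induced on a `T`-module. -/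
def lamT (S : RightMonoidalStruct C R) (N : TMod S) (r : R ⟶ R) : N.X ⟶ N.X :=
  S.η N.X ≫ S.smpHom r (𝟙 N.X) ≫ N.act

lemma smpHom_left (S : RightMonoidalStruct C R) {X X' Y Y' : C} (f : X ⟶ X') (g : Y ⟶ Y') :
    S.smpHom f g = S.smpHom f (𝟙 Y) ≫ S.smpHom (𝟙 X') g := by
  rw [← S.smpHom_comp]; simp

lemma smpHom_right (S : RightMonoidalStruct C R) {X X' Y Y' : C} (f : X ⟶ X') (g : Y ⟶ Y') :
    S.smpHom f g = S.smpHom (𝟙 X) g ≫ S.smpHom f (𝟙 Y') := by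
  rw [← S.smpHom_comp]; simp

lemma smp_exchange (S : RightMonoidalStruct C R) {X X' Y Y' : C} (f : X ⟶ X') (g : Y ⟶ Y') :
    S.smpHom f (𝟙 Y) ≫ S.smpHom (𝟙 X') g = S.smpHom (𝟙 X) g ≫ S.smpHom f (𝟙 Y') := by
  rw [← S.smpHom_comp, ← S.smpHom_comp]; simp

lemma lamQ_id (S : RightMonoidalStruct C R) (L : QComod S) :
    lamQ S L (𝟙 R) = 𝟙 L.X := by
  rw [lamQ, S.smpHom_id, Category.id_comp, L.counit]

lemma lamQ_comp (S : RightMonoidalStruct C R) (L : QComod S) (r r' : R ⟶ R) :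
    lamQ S L (r ≫ r') = lamQ S L r ≫ lamQ S L r' := by
  unfold lamQ
  symm
  simp only [Category.assoc]
  slice_lhs 3 4 => rw [← S.ε_natural L.coact]
  slice_lhs 2 3 => rw [← smp_exchange S L.coact r]
  slice_lhs 1 2 => rw [L.coassoc]
  rw [RightMonoidalStruct.δ]
  simp only [Category.assoc]
  have hγ : S.γ L.X R R ≫ S.smpHom (𝟙 (S.smp L.X R)) r
      = S.smpHom (𝟙 L.X) (S.smpHom (𝟙 R) r) ≫ S.γ L.X R R := by
    have h := S.γ_natural (𝟙 L.X) (𝟙 R) r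
    rw [S.smpHom_id] at h
    exact h.symm
  slice_lhs 3 4 => rw [hγ]
  slice_lhs 4 5 => rw [S.counit_triangle]
  have h4 : S.η R ≫ S.smpHom (𝟙 R) r ≫ S.ε R ≫ r' = r ≫ r' := by
    rw [← Category.assoc, ← S.η_natural r, Category.assoc,
      ← Category.assoc (S.η R), S.unit_counit]
    simp
  slice_lhs 2 5 => rw [← S.smpHom_comp, ← S.smpHom_comp, ← S.smpHom_comp]
  simp only [Category.id_comp, Category.assoc, h4]

lemma lamQ_equiv (S : RightMonoidalStruct C R) {K L : QComod S} (t : K ⟶ L) (r : R ⟶ R) :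
    lamQ S K r ≫ t.1 = t.1 ≫ lamQ S L r := by
  unfold lamQ
  simp only [Category.assoc]
  slice_lhs 3 4 => rw [← S.ε_natural t.1]
  slice_lhs 2 3 => rw [← smp_exchange S t.1 r]
  slice_lhs 1 2 => rw [t.2]
  simp only [Category.assoc]

lemma lamT_id (S : RightMonoidalStruct C R) (N : TMod S) :
    lamT S N (𝟙 R) = 𝟙 N.X := by
  rw [lamT, S.smpHom_id, Category.id_comp, N.unit]

lemma lamT_comp (S : RightMonoidalStruct C R) (N : TMod S) (r r' : R ⟶ R) :
    lamT S N (r ≫ r') = lamT S N r ≫ lamT S N r' := by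
  unfold lamT
  symm
  simp only [Category.assoc]
  slice_lhs 3 4 => rw [S.η_natural N.act]
  slice_lhs 2 3 => rw [S.η_natural (S.smpHom r (𝟙 N.X))]
  slice_lhs 4 5 => rw [← smp_exchange S r' N.act]
  slice_lhs 5 6 => rw [N.assoc]
  rw [RightMonoidalStruct.μ]
  simp only [Category.assoc]
  have h34 : S.smpHom (𝟙 R) (S.smpHom r (𝟙 N.X)) ≫ S.smpHom r' (𝟙 (S.smp R N.X))
      = S.smpHom r' (S.smpHom r (𝟙 N.X)) := by
    rw [← S.smpHom_comp]; simp
  slice_lhs 3 4 => rw [h34]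
  slice_lhs 3 4 => rw [S.γ_natural r' r (𝟙 N.X)]
  slice_lhs 2 3 => rw [S.unit_triangle]
  have h5 : S.η R ≫ S.smpHom r' r ≫ S.ε R = r ≫ r' := by
    rw [smpHom_right S r' r]
    simp only [Category.assoc]
    rw [← Category.assoc, ← S.η_natural r, Category.assoc, S.ε_natural r',
      ← Category.assoc (S.η R), S.unit_counit]
    simp
  slice_lhs 2 4 => rw [← S.smpHom_comp, ← S.smpHom_comp]
  simp only [Category.comp_id, Category.id_comp, Category.assoc, h5]

lemma lamT_equiv (S : RightMonoidalStruct C R) {M N : TMod S} (t : M ⟶ N) (r : R ⟶ R) :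
    lamT S M r ≫ t.1 = t.1 ≫ lamT S N r := by
  unfold lamT
  simp only [Category.assoc]
  slice_lhs 3 4 => rw [t.2]
  slice_lhs 2 3 => rw [smp_exchange S r t.1]
  slice_lhs 1 2 => rw [← S.η_natural t.1]
  simp only [Category.assoc]

/-- The faithful functor `F_z : M^Q → 𝓔`. -/
def Fz (S : RightMonoidalStruct C R) : QComod S ⥤ EObject S where
  obj L := ⟨L.X, lamQ S L, lamQ_id S L, lamQ_comp S L⟩
  map t := ⟨t.1, fun r => lamQ_equiv S t r⟩
  map_id _ := Subtype.ext rfl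
  map_comp _ _ := Subtype.ext rfl

/-- The faithful functor `F_q : M_T → 𝓔`. -/
def Fq (S : RightMonoidalStruct C R) : TMod S ⥤ EObject S where
  obj N := ⟨N.X, lamT S N, lamT_id S N, lamT_comp S N⟩
  map t := ⟨t.1, fun r => lamT_equiv S t r⟩
  map_id _ := Subtype.ext rfl
  map_comp _ _ := Subtype.ext rfl

/-- Lemma 5.1 of Szlachányi.  (a) On any `Q`-comodule `L`,
`λ_L(r) := ε_L ∘ (L ⋆ r) ∘ Δ_L` is a monoid morphism `E = End R → End L`,
every `Q`-comodule morphism is `E`-equivariant, and hence there is a faithful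
functor `F_z : M^Q → 𝓔` acting as the identity on underlying objects and
arrows.  (b) Dually for `T`-modules with `λ_N(r) := ∇_N ∘ (r ⋆ N) ∘ η_N`,
yielding a faithful functor `F_q : M_T → 𝓔`. -/
theorem comodules_and_modules_are_E_objects (S : RightMonoidalStruct C R) :
    (∀ L : QComod S, lamQ S L (𝟙 R) = 𝟙 L.X) ∧
    (∀ (L : QComod S) (r r' : R ⟶ R), lamQ S L (r ≫ r') = lamQ S L r ≫ lamQ S L r') ∧
    (∀ {K L : QComod S} (t : K ⟶ L) (r : R ⟶ R),
        lamQ S K r ≫ t.1 = t.1 ≫ lamQ S L r) ∧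
    (∀ N : TMod S, lamT S N (𝟙 R) = 𝟙 N.X) ∧
    (∀ (N : TMod S) (r r' : R ⟶ R), lamT S N (r ≫ r') = lamT S N r ≫ lamT S N r') ∧
    (∀ {M N : TMod S} (t : M ⟶ N) (r : R ⟶ R),
        lamT S M r ≫ t.1 = t.1 ≫ lamT S N r) ∧
    (∃ Fz : QComod S ⥤ EObject S, Fz.Faithful ∧
      ∃ hobj : ∀ L : QComod S, (Fz.obj L).X = L.X,
        (∀ (L : QComod S) (r : R ⟶ R),
            (Fz.obj L).act r = eqToHom (hobj L) ≫ lamQ S L r ≫ eqToHom (hobj L).symm) ∧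
        (∀ {K L : QComod S} (t : K ⟶ L),
            (Fz.map t).1 = eqToHom (hobj K) ≫ t.1 ≫ eqToHom (hobj L).symm)) ∧
    (∃ Fq : TMod S ⥤ EObject S, Fq.Faithful ∧
      ∃ hobj : ∀ N : TMod S, (Fq.obj N).X = N.X,
        (∀ (N : TMod S) (r : R ⟶ R),
            (Fq.obj N).act r = eqToHom (hobj N) ≫ lamT S N r ≫ eqToHom (hobj N).symm) ∧
        (∀ {M N : TMod S} (t : M ⟶ N),
            (Fq.map t).1 = eqToHom (hobj M) ≫ t.1 ≫ eqToHom (hobj N).symm)) := by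
  refine ⟨lamQ_id S, lamQ_comp S, fun t r => lamQ_equiv S t r,
    lamT_id S, lamT_comp S, fun t r => lamT_equiv S t r, ?_, ?_⟩
  · refine ⟨Fz S, ⟨fun h => Subtype.ext (congrArg (fun f => f.1) h)⟩,
      fun L => rfl, fun L r => by simp [Fz]; exact (Category.id_comp _).symm, fun t => by simp [Fz]; exact (Category.id_comp _).symm⟩
  · refine ⟨Fq S, ⟨fun h => Subtype.ext (congrArg (fun f => f.1) h)⟩,
      fun N => rfl, fun N r => by simp [Fq]; exact (Category.id_comp _).symm, fun t => by simp [Fq]; exact (Category.id_comp _).symm⟩
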